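/- If the transport family T satisfies (ID), (PI) and (DA) with respect to κ, then there exist a Borel set 𝕐₀ ⊆ 𝕐 and, for each x ∈ 𝕏, Borel maps f_x : 𝕐₀ → 𝕐 and f_x⁺ : 𝕐 → 𝕐₀ with f_x⁺(f_x(e)) = e for all e ∈ 𝕐₀ (in particular each f_x is injective), such that for every x, x' ∈ 𝕏 one has T_{x,x'}(y) = f_x(f_{x'}⁺(y)) for κ(x')-almost every y. -/

import Mathlib

open MeasureTheory ProbabilityTheory Set Function

lemma not_countable_cantor : ¬ Countable (ℕ → Bool) := by
  intro hc
  obtain ⟨g, hg⟩ := exists_surjective_nat (ℕ → Bool)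
  obtain ⟨n, hn⟩ := hg (fun n => !(g n n))
  have := congrFun hn n
  simp at this

lemma meqset {α Y : Type*} [MeasurableSpace α] [MeasurableSpace Y] [StandardBorelSpace Y]
    {f g : α → Y} (hf : Measurable f) (hg : Measurable g) :
    MeasurableSet {x | f x = g x} := by
  letI := upgradeStandardBorel Y
  exact hf.stronglyMeasurable.measurableSet_eq_fun hg.stronglyMeasurable

lemma exists_null_embedding {Y : Type*} [MeasurableSpace Y] [StandardBorelSpace Y]
    (h : ¬Countable Y) (μ : Measure Y) [IsFiniteMeasure μ] :
    ∃ (Z : Set Y) (ζ : Y → Y), MeasurableSet Z ∧ μ Z = 0 ∧ Measurable ζ ∧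
      Function.Injective ζ ∧ Set.range ζ ⊆ Z := by
  letI := upgradeStandardBorel Y
  obtain ⟨g0, -, g0c, g0i⟩ :=
    isClosed_univ.exists_nat_bool_injection_of_not_countable (α := Y)
      (by rwa [Set.countable_univ_iff])
  set J : ((ℕ → Bool) × (ℕ → Bool)) → (ℕ → Bool) :=
    fun p n => if Even n then p.1 (n / 2) else p.2 (n / 2) with hJ
  have Jc : Continuous J := by
    apply continuous_pi
    intro n
    by_cases hn : Even n <;> simp only [hJ, hn, if_true, if_false]
    · exact (continuous_apply _).comp continuous_fst
    · exact (continuous_apply _).comp continuous_snd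
  have Ji : Function.Injective J := by
    intro p q hpq
    have h1 : p.1 = q.1 := by
      funext k
      have := congrFun hpq (2 * k)
      simpa [hJ, Nat.mul_div_cancel_left k (by norm_num : 0 < 2)] using this
    have h2 : p.2 = q.2 := by
      funext k
      have := congrFun hpq (2 * k + 1)
      have hodd : ¬ Even (2 * k + 1) := by simp [Nat.even_add_one, parity_simps]
      have hdiv : (2 * k + 1) / 2 = k := by omega
      simpa [hJ, hodd, hdiv] using this
    exact Prod.ext h1 h2
  set G : ((ℕ → Bool) × (ℕ → Bool)) → Y := g0 ∘ J with hG
  have Gc : Continuous G := g0c.comp Jc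
  have Gi : Function.Injective G := g0i.comp Ji
  set S : (ℕ → Bool) → Set Y := fun t => Set.range (fun s => G (t, s)) with hS
  have Scomp : ∀ t, IsCompact (S t) := fun t =>
    isCompact_range (Gc.comp (Continuous.prodMk_right t))
  have Smeas : ∀ t, MeasurableSet (S t) := fun t => ((Scomp t).isClosed).measurableSet
  have Sdisj : Pairwise (Disjoint on S) := by
    intro t t' htt'
    rw [Function.onFun, Set.disjoint_left]
    rintro y ⟨s, rfl⟩ ⟨s', hy⟩
    exact htt' (congrArg Prod.fst (Gi hy)).symm
  have hcnt : Set.Countable {t | 0 < μ (S t)} :=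
    MeasureTheory.Measure.countable_meas_pos_of_disjoint_iUnion Smeas Sdisj
  have hex : ∃ t, ¬ 0 < μ (S t) := by
    by_contra hc
    push_neg at hc
    have hsub : (Set.univ : Set (ℕ → Bool)) ⊆ {t | 0 < μ (S t)} := fun t _ => hc t
    have := (hcnt.mono hsub)
    rw [Set.countable_univ_iff] at this
    exact not_countable_cantor this
  obtain ⟨t₀, ht₀⟩ := hex
  have hZ0 : μ (S t₀) = 0 := by simpa using ht₀
  let e : Y ≃ᵐ (ℕ → Bool) := PolishSpace.measurableEquivNatBoolOfNotCountable h
  refine ⟨S t₀, (fun s => G (t₀, s)) ∘ e, Smeas t₀, hZ0, ?_, ?_, ?_⟩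
  · exact ((Gc.comp (Continuous.prodMk_right t₀)).measurable).comp e.measurable
  · intro y y' hyy'
    exact e.injective (congrArg Prod.snd (Gi hyy'))
  · rintro y ⟨s, rfl⟩
    exact ⟨e s, rfl⟩

theorem cocycle_factorization
    {𝕏 𝕐 : Type*} [MeasurableSpace 𝕏] [MeasurableSpace 𝕐]
    [StandardBorelSpace 𝕏] [StandardBorelSpace 𝕐]
    (κ : Kernel 𝕏 𝕐) [IsMarkovKernel κ]
    (T : 𝕏 → 𝕏 → 𝕐 → 𝕐)
    (hT : Measurable fun p : (𝕏 × 𝕏) × 𝕐 => T p.1.1 p.1.2 p.2)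
    (hID : ∀ x, ∀ᵐ y ∂(κ x), T x x y = y)
    (hPI : ∀ x x' x'', ∀ᵐ y ∂(κ x), T x'' x' (T x' x y) = T x'' x y)
    (hDA : ∀ x x', (κ x).map (T x' x) = κ x') :
    ∃ Y₀ : Set 𝕐, MeasurableSet Y₀ ∧
      ∃ (f : 𝕏 → Y₀ → 𝕐) (finv : 𝕏 → 𝕐 → Y₀),
        (∀ x, Measurable (f x)) ∧
        (∀ x, Measurable (finv x)) ∧
        (∀ x e, finv x (f x e) = e) ∧
        (∀ x, Function.Injective (f x)) ∧
        (∀ x x', ∀ᵐ y ∂(κ x'), T x x' y = f x (finv x' y)) := by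
  classical
  rcases isEmpty_or_nonempty 𝕏 with hX | hX
  · exact ⟨∅, MeasurableSet.empty, fun x => isEmptyElim x, fun x => isEmptyElim x,
      fun x => isEmptyElim x, fun x => isEmptyElim x, fun x => isEmptyElim x,
      fun x => isEmptyElim x, fun x _ => isEmptyElim x⟩
  obtain ⟨x₀⟩ := hX
  have Tm : ∀ a b, Measurable (T a b) := by
    intro a b
    have hinner : Measurable (fun y : 𝕐 => (((a, b) : 𝕏 × 𝕏), y)) :=
      measurable_const.prodMk measurable_id
    exact hT.comp hinner
  set μ : Measure 𝕐 := κ x₀ with hμdef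
  have hmap : ∀ x', μ.map (T x' x₀) = κ x' := fun x' => hDA x₀ x'
  have Bae : ∀ x, ∀ᵐ e ∂μ, T x₀ x (T x x₀ e) = e := by
    intro x
    filter_upwards [hPI x₀ x x₀, hID x₀] with e h1 h2
    rw [h1, h2]
  have PIae : ∀ x x', ∀ᵐ e ∂μ, T x x' (T x' x₀ e) = T x x₀ e := fun x x' => hPI x₀ x' x
  by_cases hY : Countable 𝕐
  · -- countable case
    set A : Set 𝕐 := {y | μ {y} ≠ 0} with hA
    have Acnt : A.Countable := A.to_countable
    have Ameas : MeasurableSet A := Acnt.measurableSet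
    have hAc : μ Aᶜ = 0 := by
      have h1 : Aᶜ = ⋃ y ∈ Aᶜ, {y} := (Set.biUnion_of_singleton Aᶜ).symm
      rw [h1, measure_biUnion_null_iff (Aᶜ.to_countable)]
      intro y hy
      simpa [hA] using hy
    have hAmem : ∀ᵐ e ∂μ, e ∈ A := by
      rw [ae_iff]
      simpa using (show μ {a | a ∉ A} = 0 from hAc)
    have hAne : A.Nonempty := by
      rcases Set.eq_empty_or_nonempty A with h | h
      · exfalso
        have : μ Set.univ = 0 := by
          rw [← Set.compl_empty, ← h]; exact hAc
        have h2 : μ Set.univ = 1 := measure_univ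
        rw [this] at h2; exact zero_ne_one h2
      · exact h
    obtain ⟨e₀, he₀⟩ := hAne
    have hAB : ∀ x, ∀ e ∈ A, T x₀ x (T x x₀ e) = e := by
      intro x e he
      by_contra hne
      apply he
      apply measure_mono_null _ (ae_iff.mp (Bae x))
      intro z hz
      simp only [Set.mem_singleton_iff] at hz
      subst hz
      exact hne
    haveI : Countable ↥A := Acnt.to_subtype
    set f : 𝕏 → ↥A → 𝕐 := fun x e => T x x₀ e.1 with hf
    have finj : ∀ x, Function.Injective (f x) := by
      intro x e e' hee'
      have := congrArg (T x₀ x) hee'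
      rw [hf] at hee'
      have h1 := hAB x e.1 e.2
      have h2 := hAB x e'.1 e'.2
      apply Subtype.ext
      rw [← h1, ← h2]
      simp only [hf] at hee'
      rw [hee']
    set finv : 𝕏 → 𝕐 → ↥A := fun x => Function.extend (f x) id (fun _ => ⟨e₀, he₀⟩) with hfinv
    have hleft : ∀ x (e : ↥A), finv x (f x e) = e := by
      intro x e
      simpa [hfinv] using (finj x).extend_apply id (fun _ => (⟨e₀, he₀⟩ : ↥A)) e
    have hRmeas : ∀ x, MeasurableSet (Set.range (f x)) := by
      intro x
      have : (Set.range (f x)).Countable := Set.countable_range _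
      exact this.measurableSet
    have finvmeas : ∀ x, Measurable (finv x) := by
      intro x
      have hext : ∀ (b : ↥A) (y : 𝕐), finv x y = b ↔
          (y = f x b ∨ (y ∉ Set.range (f x) ∧ b = ⟨e₀, he₀⟩)) := by
        intro b y
        simp only [hfinv, Function.extend_def]
        by_cases hr : ∃ a, f x a = y
        · rw [dif_pos hr]
          have ha := Classical.choose_spec hr
          constructor
          · intro hid
            left
            rw [← ha]
            simp only [id_eq] at hid
            rw [hid]
          · rintro (h | h)
            · simp only [id_eq]
              exact finj x (ha.trans h)
            · exact absurd hr (by simpa using h.1)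
        · rw [dif_neg hr]
          constructor
          · intro hb
            right
            exact ⟨by simpa using hr, hb.symm⟩
          · rintro (h | h)
            · exact absurd ⟨b, h.symm⟩ hr
            · exact h.2.symm
      apply measurable_to_countable'
      intro b
      have hchar : (finv x) ⁻¹' {b}
          = {y | y = f x b} ∪ ((Set.range (f x))ᶜ ∩ {y | b = ⟨e₀, he₀⟩}) := by
        ext y
        simp only [Set.mem_preimage, Set.mem_singleton_iff, hext b y, Set.mem_union,
          Set.mem_inter_iff, Set.mem_setOf_eq, Set.mem_compl_iff]
      rw [hchar]
      refine MeasurableSet.union (by simp only [Set.setOf_eq_eq_singleton]; exact measurableSet_singleton (f x b)) ?_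
      refine ((hRmeas x).compl).inter ?_
      by_cases hb : b = ⟨e₀, he₀⟩
      · simp [hb]
      · simp [hb]
    refine ⟨A, Ameas, f, finv, fun x => measurable_of_countable _, finvmeas, hleft,
      finj, ?_⟩
    intro x x'
    have hms : MeasurableSet {y | T x x' y = f x (finv x' y)} :=
      meqset (Tm x x') ((measurable_of_countable (f x)).comp (finvmeas x'))
    rw [← hmap x', MeasureTheory.ae_map_iff (Tm x' x₀).aemeasurable hms]
    filter_upwards [PIae x x', hAmem] with e hpi he
    show T x x' (T x' x₀ e) = f x (finv x' (T x' x₀ e))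
    have h1 : T x' x₀ e = f x' ⟨e, he⟩ := rfl
    rw [h1, hleft x' ⟨e, he⟩]
    show T x x' (T x' x₀ e) = T x x₀ e
    exact hpi
  · -- uncountable case
    have hYne : Nonempty 𝕐 := by
      by_contra hne
      rw [not_nonempty_iff] at hne
      exact hY inferInstance
    have hxz : ∀ x : 𝕏, ∃ (Z : Set 𝕐) (ζ : 𝕐 → 𝕐), MeasurableSet Z ∧ (κ x) Z = 0 ∧
        Measurable ζ ∧ Function.Injective ζ ∧ Set.range ζ ⊆ Z :=
      fun x => exists_null_embedding hY (κ x)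
    choose Z ζ Zmeas Znull ζmeas ζinj ζrange using hxz
    set B : 𝕏 → Set 𝕐 := fun x => {e | T x₀ x (T x x₀ e) = e ∧ T x x₀ e ∉ Z x} with hB
    have Bmeas : ∀ x, MeasurableSet (B x) := by
      intro x
      have h1 : MeasurableSet {e | T x₀ x (T x x₀ e) = e} :=
        meqset ((Tm x₀ x).comp (Tm x x₀)) measurable_id
      have h2 : MeasurableSet {e | T x x₀ e ∉ Z x} := (Tm x x₀) (Zmeas x).compl
      exact h1.inter h2
    have Bfull : ∀ x, ∀ᵐ e ∂μ, e ∈ B x := by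
      intro x
      have hpre : μ ((T x x₀) ⁻¹' (Z x)) = 0 := by
        rw [← Measure.map_apply (Tm x x₀) (Zmeas x), hDA x₀ x]
        exact Znull x
      have h2 : ∀ᵐ e ∂μ, T x x₀ e ∉ Z x := by
        rw [ae_iff]
        simpa using (show μ {a | T x x₀ a ∈ Z x} = 0 from hpre)
      filter_upwards [Bae x, h2] with e h1 h2
      exact ⟨h1, h2⟩
    set F : 𝕏 → 𝕐 → 𝕐 := fun x e => if e ∈ B x then T x x₀ e else ζ x e with hF
    have Fmeas : ∀ x, Measurable (F x) := fun x =>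
      Measurable.ite (Bmeas x) (Tm x x₀) (ζmeas x)
    have Finj : ∀ x, Function.Injective (F x) := by
      intro x e e' hee'
      simp only [hF] at hee'
      by_cases he : e ∈ B x <;> by_cases he' : e' ∈ B x
      · rw [if_pos he, if_pos he'] at hee'
        have := congrArg (T x₀ x) hee'
        rwa [he.1, he'.1] at this
      · rw [if_pos he, if_neg he'] at hee'
        exact absurd (hee' ▸ ζrange x (Set.mem_range_self e')) he.2
      · rw [if_neg he, if_pos he'] at hee'
        exact absurd (hee'.symm ▸ ζrange x (Set.mem_range_self e)) he'.2
      · rw [if_neg he, if_neg he'] at hee'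
        exact ζinj x hee'
    have hEmb : ∀ x, MeasurableEmbedding (F x) := fun x =>
      (Fmeas x).measurableEmbedding (Finj x)
    have hG : ∀ x, ∃ g : 𝕐 → 𝕐, Measurable g ∧ g ∘ F x = id := fun x =>
      (hEmb x).exists_measurable_extend measurable_id (fun _ => hYne)
    choose G Gmeas Gspec using hG
    refine ⟨Set.univ, MeasurableSet.univ, fun x e => F x e.1,
      fun x y => ⟨G x y, Set.mem_univ _⟩, ?_, ?_, ?_, ?_, ?_⟩
    · exact fun x => (Fmeas x).comp measurable_subtype_coe
    · exact fun x => (Gmeas x).subtype_mk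
    · intro x e
      apply Subtype.ext
      exact congrFun (Gspec x) e.1
    · intro x e e' h
      apply Subtype.ext
      exact Finj x h
    · intro x x'
      have hms : MeasurableSet {y | T x x' y = F x (G x' y)} :=
        meqset (Tm x x') ((Fmeas x).comp (Gmeas x'))
      show ∀ᵐ y ∂κ x', T x x' y = F x (G x' y)
      rw [← hmap x', MeasureTheory.ae_map_iff (Tm x' x₀).aemeasurable hms]
      filter_upwards [PIae x x', Bfull x, Bfull x'] with e hpi hBx hBx'
      show T x x' (T x' x₀ e) = F x (G x' (T x' x₀ e))
      have h1 : F x' e = T x' x₀ e := by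
        simp only [hF, if_pos hBx']
      have h2 : G x' (T x' x₀ e) = e := by
        rw [← h1]
        exact congrFun (Gspec x') e
      rw [h2]
      have h3 : F x e = T x x₀ e := by
        simp only [hF, if_pos hBx]
      rw [h3]
      exact hpi
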